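/- For all infinite cardinals θ ≤ λ with λ < θ^{+cf(θ)}, it holds that m(λ, θ) = λ; that is, there is a family A ⊆ [λ]^θ of size λ such that for every b ∈ [λ]^θ there is a ∈ A with |a ∩ b| = θ. -/

import Mathlib

open Cardinal Set

namespace LadderPaper

/-- `C` is a closed unbounded subset of the ordinal `κ`. -/
def IsClubIn (C : Set Ordinal) (κ : Ordinal) : Prop :=
  C ⊆ Set.Iio κ ∧ (∀ α < κ, ∃ β ∈ C, α ≤ β) ∧
    ∀ α < κ, 0 < α → (∀ β < α, ∃ γ ∈ C, β < γ ∧ γ < α) → α ∈ C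

/-- `S` is a stationary subset of the ordinal `κ`. -/
def IsStationaryIn (S : Set Ordinal) (κ : Ordinal) : Prop :=
  S ⊆ Set.Iio κ ∧ ∀ C, IsClubIn C κ → (S ∩ C).Nonempty

/-- `A` is a ladder system over `S ⊆ κ`: each `A δ` (for `δ ∈ S`) is a cofinal subset of `δ`. -/
def IsLadderOn (κ : Ordinal) (S : Set Ordinal) (A : Ordinal → Set Ordinal) : Prop :=
  IsStationaryIn S κ ∧ ∀ δ ∈ S, A δ ⊆ Set.Iio δ ∧ ∀ β < δ, ∃ α ∈ A δ, β ≤ α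

/-- The order type of a set of ordinals. -/
noncomputable def otp (A : Set Ordinal) : Ordinal := Ordinal.type ((· < ·) : A → A → Prop)

/-- The set of accumulation points of a set of ordinals. -/
def acc (A : Set Ordinal) : Set Ordinal := {α ∈ A | sSup (A ∩ Set.Iio α) = α ∧ 0 < α}

/-- The set of non-accumulation points of a set of ordinals. -/
def nacc (A : Set Ordinal) : Set Ordinal := A \ acc A

/-- Lift a cardinal to the universe where cardinalities of sets of ordinals live. -/
noncomputable abbrev cl (θ : Cardinal.{0}) : Cardinal.{1} := Cardinal.lift.{1} θ

/-- Lift an ordinal to the universe where order types of sets of ordinals live. -/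
noncomputable abbrev ol (ξ : Ordinal.{0}) : Ordinal.{1} := Ordinal.lift.{1} ξ

/-- Transport a meeting family on `Iio μ.ord` to `Iio γ` when `#(Iio γ) = cl μ`. -/
lemma transport (θ μ : Cardinal.{0}) (γ : Ordinal.{0})
    (hcard : #(Set.Iio γ) = cl μ)
    (h : ∃ A : Set (Set Ordinal.{0}), #A ≤ cl μ ∧
      (∀ a ∈ A, a ⊆ Set.Iio μ.ord ∧ #a = cl θ) ∧
      ∀ b ⊆ Set.Iio μ.ord, #b = cl θ → ∃ a ∈ A, #↥(a ∩ b) = cl θ) :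
    ∃ A : Set (Set Ordinal.{0}), #A ≤ cl μ ∧
      (∀ a ∈ A, a ⊆ Set.Iio γ ∧ #a = cl θ) ∧
      ∀ b ⊆ Set.Iio γ, #b = cl θ → ∃ a ∈ A, #↥(a ∩ b) = cl θ := by
  obtain ⟨A, hA1, hA2, hA3⟩ := h
  have hmk : #(Set.Iio μ.ord) = #(Set.Iio γ) := by
    rw [hcard, Ordinal.mk_Iio_ordinal, Cardinal.card_ord]
  obtain ⟨e⟩ := Cardinal.eq.mp hmk
  set j : Ordinal.{0} → Ordinal.{0} :=
    fun o => if h : o < μ.ord then (e ⟨o, h⟩ : Ordinal) else o with hj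
  have hjmem : ∀ o < μ.ord, j o ∈ Set.Iio γ := by
    intro o ho
    simp only [hj, dif_pos ho]
    exact (e ⟨o, ho⟩).2
  have hinj : Set.InjOn j (Set.Iio μ.ord) := by
    intro x hx y hy hxy
    have hx' : j x = (e ⟨x, hx⟩ : Ordinal) := dif_pos hx
    have hy' : j y = (e ⟨y, hy⟩ : Ordinal) := dif_pos hy
    rw [hx', hy'] at hxy
    have : e ⟨x, hx⟩ = e ⟨y, hy⟩ := Subtype.ext hxy
    simpa using e.injective this
  have hsurj : ∀ z ∈ Set.Iio γ, ∃ o, o < μ.ord ∧ j o = z := by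
    intro z hz
    set o := e.symm ⟨z, hz⟩ with ho
    refine ⟨(o : Ordinal), o.2, ?_⟩
    have h1 : j (o : Ordinal) = (e ⟨(o : Ordinal), o.2⟩ : Ordinal) := dif_pos o.2
    rw [h1, Subtype.coe_eta, ho, e.apply_symm_apply]
  refine ⟨(fun a => j '' a) '' A, ?_, ?_, ?_⟩
  · exact (Cardinal.mk_image_le).trans hA1
  · rintro _ ⟨a, ha, rfl⟩
    obtain ⟨has, hac⟩ := hA2 a ha
    constructor
    · rintro _ ⟨x, hx, rfl⟩
      exact hjmem x (has hx)
    · rw [Cardinal.mk_image_eq_of_injOn _ _ (hinj.mono has), hac]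
  · intro b hb hbc
    set b' : Set Ordinal.{0} := Set.Iio μ.ord ∩ j ⁻¹' b with hb'
    have himg : j '' b' = b := by
      apply Set.Subset.antisymm
      · rintro _ ⟨x, ⟨hx1, hx2⟩, rfl⟩
        exact hx2
      · intro z hz
        obtain ⟨o, ho, rfl⟩ := hsurj z (hb hz)
        exact ⟨o, ⟨ho, hz⟩, rfl⟩
    have hb'c : #↥b' = cl θ := by
      rw [← hbc, ← himg, Cardinal.mk_image_eq_of_injOn _ _ (hinj.mono Set.inter_subset_left)]
    obtain ⟨a, ha, hmeet⟩ := hA3 b' Set.inter_subset_left hb'c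
    refine ⟨j '' a, ⟨a, ha, rfl⟩, ?_⟩
    have heq : j '' a ∩ b = j '' (a ∩ b') := by
      apply Set.Subset.antisymm
      · rintro _ ⟨⟨x, hx, rfl⟩, hzb⟩
        exact ⟨x, ⟨hx, (hA2 a ha).1 hx, hzb⟩, rfl⟩
      · rintro _ ⟨x, ⟨hx1, hx2⟩, rfl⟩
        exact ⟨⟨x, hx1, rfl⟩, hx2.2⟩
    rw [heq, Cardinal.mk_image_eq_of_injOn _ _
      (hinj.mono (Set.inter_subset_left.trans (hA2 a ha).1)), hmeet]

set_option maxHeartbeats 1000000 in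
lemma key (θ : Cardinal.{0}) (α : Ordinal.{0}) (hθ : ℵ₀ ≤ θ) (hθα : θ = Cardinal.aleph α) :
    ∀ lam : Cardinal.{0}, θ ≤ lam → lam < Cardinal.aleph (α + (θ.ord.cof).ord) →
    ∃ A : Set (Set Ordinal.{0}), #A ≤ cl lam ∧
      (∀ a ∈ A, a ⊆ Set.Iio lam.ord ∧ #a = cl θ) ∧
      ∀ b ⊆ Set.Iio lam.ord, #b = cl θ → ∃ a ∈ A, #↥(a ∩ b) = cl θ := by
  intro lam
  induction lam using WellFounded.induction (hwf := Cardinal.lt_wf) with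
  | _ lam IH =>
  intro hθlam hbound
  have hclθ : (ℵ₀ : Cardinal.{1}) ≤ cl θ := by
    simpa using Cardinal.lift_le.{1,0}.mpr hθ
  have hcllam : (ℵ₀ : Cardinal.{1}) ≤ cl lam := hclθ.trans (Cardinal.lift_le.mpr hθlam)
  rcases eq_or_lt_of_le hθlam with heq | hlt
  · -- base case lam = θ
    subst heq
    refine ⟨{Set.Iio θ.ord}, ?_, ?_, ?_⟩
    · rw [Cardinal.mk_singleton]
      exact le_trans (by norm_num) hcllam
    · rintro a rfl
      exact ⟨le_refl _, by rw [Ordinal.mk_Iio_ordinal, Cardinal.card_ord]⟩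
    · intro b hb hbc
      exact ⟨Set.Iio θ.ord, rfl, by rw [Set.inter_eq_self_of_subset_right hb]; exact hbc⟩
  · rcases lt_or_ge θ lam.ord.cof with hcof | hcof
    · -- case 2a: every θ-sized subset is bounded
      set s : Set Ordinal.{0} := {γ | γ < lam.ord ∧ θ ≤ γ.card} with hs
      have H : ∀ γ : Ordinal.{0}, ∃ A : Set (Set Ordinal.{0}), γ ∈ s →
          (#A ≤ cl lam ∧ (∀ a ∈ A, a ⊆ Set.Iio γ ∧ #a = cl θ) ∧
            ∀ b ⊆ Set.Iio γ, #b = cl θ → ∃ a ∈ A, #↥(a ∩ b) = cl θ) := by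
        intro γ
        by_cases hγ : γ ∈ s
        · obtain ⟨hγlt, hγθ⟩ := hγ
          have hc1 : γ.card < lam := Cardinal.lt_ord.mp hγlt
          have h0 := IH γ.card hc1 hγθ (hc1.trans hbound)
          obtain ⟨A, hA1, hA2, hA3⟩ := transport θ γ.card γ (by rw [Ordinal.mk_Iio_ordinal]) h0
          exact ⟨A, fun _ => ⟨hA1.trans (Cardinal.lift_le.mpr hc1.le), hA2, hA3⟩⟩
        · exact ⟨∅, fun h => absurd h hγ⟩
      choose F hF using H
      refine ⟨⋃ γ ∈ s, F γ, ?_, ?_, ?_⟩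
      · refine le_trans (Cardinal.mk_biUnion_le F s) ?_
        have h1 : #s ≤ cl lam := by
          refine le_trans (Cardinal.mk_le_mk_of_subset (t := Set.Iio lam.ord) (fun γ hγ => hγ.1)) ?_
          rw [Ordinal.mk_Iio_ordinal, Cardinal.card_ord]
        have h2 : (⨆ γ : s, #(F γ.1)) ≤ cl lam := ciSup_le' fun γ => (hF γ.1 γ.2).1
        calc #s * ⨆ γ : s, #(F γ.1) ≤ cl lam * cl lam := mul_le_mul' h1 h2
          _ = cl lam := Cardinal.mul_eq_self hcllam
      · rintro a ha
        rw [Set.mem_iUnion₂] at ha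
        obtain ⟨γ, hγ, haγ⟩ := ha
        obtain ⟨h1, h2⟩ := (hF γ hγ).2.1 a haγ
        exact ⟨h1.trans (fun x hx => lt_trans hx hγ.1), h2⟩
      · intro b hb hbc
        have hι : #θ.ord.ToType = θ := Cardinal.mk_ord_toType θ
        obtain ⟨e⟩ : Nonempty (θ.ord.ToType ≃ ↥b) := by
          rw [← Cardinal.lift_mk_eq'.{0,1}]
          simp [hι, hbc]
        set f : θ.ord.ToType → Ordinal.{0} := fun i => ((e i : ↥b) : Ordinal) with hf
        have hflt : ∀ i, f i < lam.ord := fun i => hb (e i).2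
        have hsup : iSup f < lam.ord := Ordinal.iSup_lt_ord (by rw [hι]; exact hcof) hflt
        set γ := Order.succ (iSup f) with hγdef
        have hγlt : γ < lam.ord := (Cardinal.isSuccLimit_ord (hθ.trans hθlam)).succ_lt hsup
        have hbγ : b ⊆ Set.Iio γ := by
          intro x hx
          have hx' : x = f (e.symm ⟨x, hx⟩) := by simp [hf]
          calc x = f (e.symm ⟨x, hx⟩) := hx'
            _ ≤ iSup f := Ordinal.le_iSup f _
            _ < γ := Order.lt_succ _
        have hγcard : θ ≤ γ.card := by
          have h1 : #↥b ≤ #(Set.Iio γ) := Cardinal.mk_le_mk_of_subset hbγ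
          rw [hbc, Ordinal.mk_Iio_ordinal] at h1
          exact Cardinal.lift_le.mp h1
        have hγs : γ ∈ s := ⟨hγlt, hγcard⟩
        obtain ⟨a, ha, hmeet⟩ := (hF γ hγs).2.2 b hbγ hbc
        exact ⟨a, Set.mem_biUnion hγs ha, hmeet⟩
    · -- case 2b: singular case
      have hsucc : ∀ ν : Cardinal.{0}, ν < lam → Order.succ ν < lam := by
        intro ν hν
        rcases lt_or_ge ν θ with h1 | h1
        · exact lt_of_le_of_lt (Order.succ_le_of_lt h1) hlt
        · rcases lt_or_eq_of_le (Order.succ_le_of_lt hν) with h2 | h2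
          · exact h2
          · exfalso
            have hreg := Cardinal.isRegular_succ (hθ.trans h1)
            rw [h2] at hreg
            rw [hreg.cof_eq] at hcof
            exact absurd hlt (not_lt.mpr hcof)
      have hcflt : lam.ord.cof < θ.ord.cof := by
        obtain ⟨β, hβ⟩ : ∃ β, lam = Cardinal.aleph β := (Cardinal.mem_range_aleph_iff.mpr (hθ.trans hθlam)).imp fun _ h => h.symm
        have hαβ : α ≤ β := by
          rw [← Cardinal.aleph_le_aleph, ← hθα, ← hβ]; exact hθlam
        set ξ := β - α with hξdef
        have hβξ : β = α + ξ := (Ordinal.add_sub_cancel_of_le hαβ).symm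
        have hξc : ξ < (θ.ord.cof).ord := by
          have h3 : α + ξ < α + (θ.ord.cof).ord := by
            rw [← hβξ]
            rw [hβ] at hbound
            exact Cardinal.aleph_lt_aleph.mp hbound
          exact (add_lt_add_iff_left α).mp h3
        have hξ0 : ξ ≠ 0 := by
          rintro h0
          rw [h0, add_zero] at hβξ
          rw [hβξ, ← hθα] at hβ
          exact hlt.ne' hβ
        have hξlim : Order.IsSuccLimit ξ := by
          rcases Ordinal.zero_or_succ_or_isSuccLimit ξ with h | ⟨ζ, hζ⟩ | h
          · exact absurd h hξ0
          · exfalso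
            have hsl : lam = Order.succ (Cardinal.aleph (α + ζ)) := by
              rw [hβ, hβξ, ← hζ, Ordinal.add_succ, Cardinal.aleph_succ]
            have hreg := Cardinal.isRegular_succ (Cardinal.aleph0_le_aleph (α + ζ))
            rw [← hsl] at hreg
            rw [hreg.cof_eq] at hcof
            exact absurd hlt (not_lt.mpr hcof)
          · exact h
        have hβlim : Order.IsSuccLimit β := by rw [hβξ]; exact Ordinal.isSuccLimit_add α hξlim
        have hcofeq : lam.ord.cof = ξ.cof := by
          rw [hβ, Cardinal.ord_aleph, Ordinal.cof_omega hβlim, hβξ]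
          exact Ordinal.cof_add α hξ0
        calc lam.ord.cof = ξ.cof := hcofeq
          _ ≤ ξ.card := Ordinal.cof_le_card ξ
          _ < θ.ord.cof := Cardinal.lt_ord.mp hξc
      obtain ⟨ι, g, hglsub, hgcard⟩ := Ordinal.exists_lsub_cof lam.ord
      set μ : ι → Cardinal.{0} := fun i => max θ (Order.succ (g i).card) with hμ
      have hglt : ∀ i, g i < lam.ord := by
        intro i; rw [← hglsub]; exact Ordinal.lt_lsub g i
      have hθμ : ∀ i, θ ≤ μ i := fun i => le_max_left _ _
      have hμlam : ∀ i, μ i < lam := by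
        intro i
        apply max_lt hlt
        exact hsucc _ (Cardinal.lt_ord.mp (hglt i))
      have H : ∀ i, ∃ A : Set (Set Ordinal.{0}), #A ≤ cl (μ i) ∧
          (∀ a ∈ A, a ⊆ Set.Iio (μ i).ord ∧ #a = cl θ) ∧
          ∀ b ⊆ Set.Iio (μ i).ord, #b = cl θ → ∃ a ∈ A, #↥(a ∩ b) = cl θ :=
        fun i => IH (μ i) (hμlam i) (hθμ i) ((hμlam i).trans hbound)
      choose F hF using H
      have hcofθ : θ.ord.cof ≤ θ :=
        le_trans (Ordinal.cof_le_card θ.ord) (le_of_eq (Cardinal.card_ord θ))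
      refine ⟨⋃ i : ULift.{1} ι, F i.down, ?_, ?_, ?_⟩
      · have h1 : #(ULift.{1} ι) ≤ cl lam := by
          rw [Cardinal.mk_uLift, hgcard]
          exact Cardinal.lift_le.mpr
            ((Ordinal.cof_le_card lam.ord).trans (le_of_eq (Cardinal.card_ord lam)))
        have h2 : (⨆ i : ULift.{1} ι, #(F i.down)) ≤ cl lam :=
          ciSup_le' fun i => ((hF i.down).1).trans (Cardinal.lift_le.mpr (hμlam i.down).le)
        refine le_trans (Cardinal.mk_iUnion_le _) (le_trans (mul_le_mul' h1 h2)
          (le_of_eq (Cardinal.mul_eq_self hcllam)))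
      · rintro a ha
        rw [Set.mem_iUnion] at ha
        obtain ⟨i, hai⟩ := ha
        obtain ⟨h1, h2⟩ := (hF i.down).2.1 a hai
        exact ⟨h1.trans (fun x hx =>
          lt_of_lt_of_le hx (Cardinal.ord_le_ord.mpr (hμlam i.down).le)), h2⟩
      · intro b hb hbc
        have hcover : ∀ x ∈ b, ∃ i : ι, x ∈ Set.Iio (μ i).ord := by
          intro x hx
          obtain ⟨i, hi⟩ := (Ordinal.lt_lsub_iff (f := g)).mp (by rw [hglsub]; exact hb hx)
          refine ⟨i, ?_⟩
          rw [Set.mem_Iio, Cardinal.lt_ord]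
          calc x.card ≤ (g i).card := Ordinal.card_le_card hi
            _ < Order.succ (g i).card := Order.lt_succ _
            _ ≤ μ i := le_max_right _ _
        have hkey : ∃ i : ι, #↥(b ∩ Set.Iio (μ i).ord) = cl θ := by
          by_contra hno
          push_neg at hno
          have hlt' : ∀ i : ι, #↥(b ∩ Set.Iio (μ i).ord) < cl θ := fun i =>
            lt_of_le_of_ne
              (le_trans (Cardinal.mk_le_mk_of_subset Set.inter_subset_left) hbc.le) (hno i)
          have hcup : b = ⋃ i : ULift.{1} ι, (b ∩ Set.Iio (μ i.down).ord) := by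
            apply Set.Subset.antisymm
            · intro x hx
              obtain ⟨i, hi⟩ := hcover x hx
              exact Set.mem_iUnion.mpr ⟨ULift.up i, hx, hi⟩
            · exact Set.iUnion_subset fun i => Set.inter_subset_left
          have hcc : #(ULift.{1} ι) < (cl θ).ord.cof := by
            rw [Cardinal.mk_uLift, hgcard, ← Cardinal.lift_ord, ← Ordinal.lift_cof]
            exact Cardinal.lift_lt.mpr hcflt
          have hsup : (⨆ i : ULift.{1} ι, #↥(b ∩ Set.Iio (μ i.down).ord)) < cl θ :=
            Ordinal.iSup_lt hcc (fun i => hlt' i.down)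
          have hι' : #(ULift.{1} ι) < cl θ := by
            rw [Cardinal.mk_uLift, hgcard]
            exact Cardinal.lift_lt.mpr (hcflt.trans_le hcofθ)
          have hble : #↥b ≤ #(ULift.{1} ι) * ⨆ i : ULift.{1} ι,
              #↥(b ∩ Set.Iio (μ i.down).ord) := by
            calc #↥b = #↥(⋃ i : ULift.{1} ι, (b ∩ Set.Iio (μ i.down).ord)) := by rw [← hcup]
              _ ≤ _ := Cardinal.mk_iUnion_le _
          exact absurd hbc
            (lt_of_le_of_lt hble (Cardinal.mul_lt_of_lt hclθ hι' hsup)).ne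
        obtain ⟨i, hi⟩ := hkey
        obtain ⟨a, ha, hmeet⟩ := (hF i).2.2 (b ∩ Set.Iio (μ i).ord) Set.inter_subset_right hi
        refine ⟨a, Set.mem_iUnion.mpr ⟨ULift.up i, ha⟩, ?_⟩
        apply le_antisymm
        · calc #↥(a ∩ b) ≤ #↥a := Cardinal.mk_le_mk_of_subset Set.inter_subset_left
            _ = cl θ := ((hF i).2.1 a ha).2
        · calc cl θ = #↥(a ∩ (b ∩ Set.Iio (μ i).ord)) := hmeet.symm
            _ ≤ #↥(a ∩ b) := Cardinal.mk_le_mk_of_subset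
              (fun x hx => ⟨hx.1, hx.2.1⟩)


/-- For infinite cardinals `θ ≤ lam < θ^{+cf(θ)}`, `m(lam, θ) = lam`:
there is a meeting family for `[lam]^θ` of size `lam`. Here `θ = ℵ_α` and
`θ^{+cf(θ)} = ℵ_{α + cf(θ)}`. -/
theorem stmt5 (θ lam : Cardinal.{0}) (α : Ordinal.{0}) (hθ : ℵ₀ ≤ θ)
    (hθα : θ = Cardinal.aleph α)
    (hθlam : θ ≤ lam) (hbound : lam < Cardinal.aleph (α + (θ.ord.cof).ord)) :
    ∃ A : Set (Set Ordinal.{0}), #A = cl lam ∧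
      (∀ a ∈ A, a ⊆ Set.Iio lam.ord ∧ #a = cl θ) ∧
      ∀ b ⊆ Set.Iio lam.ord, #b = cl θ → ∃ a ∈ A, #↥(a ∩ b) = cl θ := by
  obtain ⟨A₀, hA1, hA2, hA3⟩ := key θ α hθ hθα lam hθlam hbound
  have hclθ : (ℵ₀ : Cardinal.{1}) ≤ cl θ := by simpa using Cardinal.lift_le.{1,0}.mpr hθ
  have hcllam : (ℵ₀ : Cardinal.{1}) ≤ cl lam := hclθ.trans (Cardinal.lift_le.mpr hθlam)
  set a₀ : Set Ordinal.{0} := Set.Iio θ.ord with ha₀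
  have ha₀sub : a₀ ⊆ Set.Iio lam.ord := fun x hx =>
    lt_of_lt_of_le hx (Cardinal.ord_le_ord.mpr hθlam)
  have ha₀card : #↥a₀ = cl θ := by rw [ha₀, Ordinal.mk_Iio_ordinal, Cardinal.card_ord]
  set R : Set (Set Ordinal.{0}) := (fun γ => a₀ \ {γ}) '' a₀ with hR
  set U : Set (Set Ordinal.{0}) := (fun δ => insert δ a₀) '' (Set.Iio lam.ord) with hU
  have hRsize : ∀ r ∈ R, r ⊆ Set.Iio lam.ord ∧ #↥r = cl θ := by
    rintro _ ⟨γ, hγ, rfl⟩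
    refine ⟨(Set.diff_subset).trans ha₀sub, ?_⟩
    have h1 : ({γ} : Set Ordinal.{0}) ⊆ a₀ := Set.singleton_subset_iff.mpr hγ
    have h2 := Cardinal.mk_diff_add_mk h1
    rw [Cardinal.mk_singleton, ha₀card] at h2
    have hinf : (ℵ₀ : Cardinal.{1}) ≤ #↥(a₀ \ {γ}) := by
      by_contra h3
      push_neg at h3
      have h4 : #↥(a₀ \ {γ}) + 1 < ℵ₀ := Cardinal.add_lt_aleph0 h3 Cardinal.one_lt_aleph0
      rw [h2] at h4
      exact absurd h4 (not_lt.mpr hclθ)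
    calc #↥(a₀ \ {γ}) = #↥(a₀ \ {γ}) + 1 := (Cardinal.add_one_eq hinf).symm
      _ = cl θ := h2
  have hUsize : ∀ u ∈ U, u ⊆ Set.Iio lam.ord ∧ #↥u = cl θ := by
    rintro _ ⟨δ, hδ, rfl⟩
    refine ⟨Set.insert_subset hδ ha₀sub, ?_⟩
    apply le_antisymm
    · calc #↥(insert δ a₀) ≤ #↥a₀ + 1 := Cardinal.mk_insert_le
        _ = cl θ := by rw [ha₀card, Cardinal.add_one_eq hclθ]
    · rw [← ha₀card]
      exact Cardinal.mk_le_mk_of_subset (Set.subset_insert δ a₀)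
  have hR' : #↥R ≤ cl lam :=
    le_trans Cardinal.mk_image_le (by rw [ha₀card]; exact Cardinal.lift_le.mpr hθlam)
  have hU' : #↥U ≤ cl lam :=
    le_trans Cardinal.mk_image_le
      (by rw [Ordinal.mk_Iio_ordinal, Cardinal.card_ord])
  have hupper : #↥(A₀ ∪ R ∪ U) ≤ cl lam := by
    calc #↥(A₀ ∪ R ∪ U) ≤ #↥(A₀ ∪ R) + #↥U := Cardinal.mk_union_le _ _
      _ ≤ (#↥A₀ + #↥R) + #↥U := add_le_add_left (Cardinal.mk_union_le _ _) _
      _ ≤ (cl lam + cl lam) + cl lam := add_le_add (add_le_add hA1 hR') hU'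
      _ = cl lam := by rw [Cardinal.add_eq_self hcllam, Cardinal.add_eq_self hcllam]
  have hlower : cl lam ≤ #↥(A₀ ∪ R ∪ U) := by
    rcases eq_or_lt_of_le hθlam with heq | hlt
    · have hinj : Set.InjOn (fun γ => a₀ \ {γ}) a₀ := by
        intro x hx y hy hxy
        have hxy' : a₀ \ {x} = a₀ \ {y} := hxy
        by_contra hne
        have hmem : x ∈ a₀ \ {y} := ⟨hx, by simpa using hne⟩
        rw [← hxy'] at hmem
        exact hmem.2 rfl
      have hRc : #↥R = cl θ := by
        rw [hR, Cardinal.mk_image_eq_of_injOn _ _ hinj, ha₀card]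
      rw [← heq, ← hRc]
      exact Cardinal.mk_le_mk_of_subset fun r hr => Or.inl (Or.inr hr)
    · set D : Set Ordinal.{0} := Set.Iio lam.ord \ Set.Iio θ.ord with hD
      have h2 := Cardinal.mk_diff_add_mk
        (Set.Iio_subset_Iio (Cardinal.ord_le_ord.mpr hθlam))
      simp only [Ordinal.mk_Iio_ordinal, Cardinal.card_ord] at h2
      have hDcard : #↥D = cl lam := by
        rcases le_or_gt (#↥D) (cl θ) with h3 | h3
        · exfalso
          have h4 : cl lam ≤ cl θ := by
            show Cardinal.lift.{1} lam ≤ Cardinal.lift.{1} θ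
            rw [← h2]
            calc #↥D + cl θ ≤ cl θ + cl θ := add_le_add_left h3 _
              _ = cl θ := Cardinal.add_eq_self hclθ
          exact absurd (Cardinal.lift_lt.mpr hlt) (not_lt.mpr h4)
        · apply le_antisymm
          · exact le_trans (Cardinal.mk_le_mk_of_subset Set.diff_subset)
              (by rw [Ordinal.mk_Iio_ordinal, Cardinal.card_ord])
          · show Cardinal.lift.{1} lam ≤ #↥D
            rw [← h2]
            calc #↥D + cl θ ≤ #↥D + #↥D := add_le_add_right h3.le _
              _ = #↥D := Cardinal.add_eq_self (hclθ.trans h3.le)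
      have hinjU : Set.InjOn (fun δ => insert δ a₀) D := by
        intro x hx y hy hxy
        have hxa : x ∉ a₀ := hx.2
        have hya : y ∉ a₀ := hy.2
        have hxy' : insert x a₀ = insert y a₀ := hxy
        have hmem : x ∈ insert y a₀ := by
          rw [← hxy']; exact Set.mem_insert x a₀
        rcases hmem with h | h
        · exact h
        · exact absurd h hxa
      have hU2 : #↥((fun δ => insert δ a₀) '' D) = cl lam := by
        rw [Cardinal.mk_image_eq_of_injOn _ _ hinjU, hDcard]
      rw [← hU2]
      apply Cardinal.mk_le_mk_of_subset
      rintro _ ⟨δ, hδ, rfl⟩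
      exact Or.inr ⟨δ, hδ.1, rfl⟩
  refine ⟨A₀ ∪ R ∪ U, le_antisymm hupper hlower, ?_, ?_⟩
  · intro a ha
    rcases ha with (ha | ha) | ha
    · exact hA2 a ha
    · exact hRsize a ha
    · exact hUsize a ha
  · intro b hb hbc
    obtain ⟨a, ha, hm⟩ := hA3 b hb hbc
    exact ⟨a, Or.inl (Or.inl ha), hm⟩


end LadderPaper
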